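/- Packing points in the support of a measure with small balls: Let X be a separable metric space, let ν be a Borel probability measure on X, let ε > 0, and let f ≥ 0 be a real number such that ν(closed ball of radius 2ε around x) ≤ f for every x ∈ X. Then for every natural number N with N·f < 1, there exists a set S ⊆ supp(ν) of cardinality N whose elements are pairwise at distance > 2ε. -/

import Mathlib

open MeasureTheory
open scoped ENNReal Matrix InnerProductSpace

namespace Paper

noncomputable section

instance matMS (d : ℕ) : MeasurableSpace (Matrix (Fin d) (Fin d) ℂ) := borel _
instance matBS (d : ℕ) : BorelSpace (Matrix (Fin d) (Fin d) ℂ) := ⟨rfl⟩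

/-- The unitary group `U(d)`. -/
abbrev UG (d : ℕ) := Matrix.unitaryGroup (Fin d) ℂ

/-- ℓ²→ℓ² operator norm (spectral norm) of a matrix. -/
def opNorm {d : ℕ} (A : Matrix (Fin d) (Fin d) ℂ) : ℝ :=
  ‖Matrix.toEuclideanCLM (𝕜 := ℂ) A‖

/-- Phase-invariant distance on unitary channels. -/
def D {d : ℕ} (U V : UG d) : ℝ :=
  ⨅ z : {z : ℂ // ‖z‖ = 1},
    opNorm ((U : Matrix (Fin d) (Fin d) ℂ) - z.val • (V : Matrix (Fin d) (Fin d) ℂ))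

/-- Closed ball of radius `r` around `V` in `U(d)` for the distance `D`. -/
def ball {d : ℕ} (V : UG d) (r : ℝ) : Set (UG d) := {U | D U V ≤ r}

/-- Haar volume of a ball of radius `r`. -/
def Vol {d : ℕ} (μ : Measure (UG d)) (r : ℝ) : ℝ≥0∞ := μ (ball 1 r)

/-- `(α,β)`-equidistribution of `ν` at scale `ε` (relative to the Haar measure `μ`). -/
def Equidistributed {d : ℕ} (μ ν : Measure (UG d)) (α β ε : ℝ) : Prop :=
  ∀ (V : UG d) (r : ℝ), ε ≤ r →
    Vol μ (α * r) ≤ ν (ball V r) ∧ ν (ball V r) ≤ Vol μ (β * r)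

/-- Products of at most `r` elements of the gate set `𝒢`. -/
def wordsLe {d : ℕ} (𝒢 : Finset (UG d)) (r : ℕ) : Set (UG d) :=
  {W | ∃ l : List (UG d), l.length ≤ r ∧ (∀ g ∈ l, g ∈ 𝒢) ∧ l.prod = W}

/-- Convolution of two measures on a monoid: pushforward of the product measure under
multiplication. -/
def mconv {G : Type*} [Monoid G] [MeasurableSpace G] (ν ϑ : Measure G) : Measure G :=
  (ν.prod ϑ).map (fun p => p.1 * p.2)

/-- `t`-fold convolution power of a measure. -/
def convPow {G : Type*} [Monoid G] [MeasurableSpace G] (ν : Measure G) : ℕ → Measure G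
  | 0 => Measure.dirac 1
  | n + 1 => mconv (convPow ν n) ν

/-- The random walk `U_t = V_t ⋯ V_1`. -/
def walk {d : ℕ} {Ω : Type*} (V : ℕ → Ω → UG d) (t : ℕ) (ω : Ω) : UG d :=
  ((List.range t).map (fun i => V (t - i) ω)).prod

/-- Euclidean space `ℂ^d`. -/
abbrev EV (d : ℕ) := EuclideanSpace ℂ (Fin d)

instance evMS (d : ℕ) : MeasurableSpace (EV d) := borel _
instance evBS (d : ℕ) : BorelSpace (EV d) := ⟨rfl⟩

/-- Distance on pure states. -/
def dS {d : ℕ} (ψ φ : EV d) : ℝ := Real.sqrt (1 - ‖⟪ψ, φ⟫_ℂ‖ ^ 2)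

/-- Ball of radius `r` around the state `φ`, inside the set of unit vectors. -/
def ballS {d : ℕ} (φ : EV d) (r : ℝ) : Set (EV d) := {ψ | ‖ψ‖ = 1 ∧ dS ψ φ ≤ r}

/-- Action of a unitary matrix on a vector. -/
def act {d : ℕ} (U : UG d) (ψ : EV d) : EV d :=
  Matrix.toEuclideanLin (U : Matrix (Fin d) (Fin d) ℂ) ψ

/-- Topological support of a measure. -/
def msupport {X : Type*} [TopologicalSpace X] [MeasurableSpace X] (ν : Measure X) : Set X :=
  {x | ∀ U : Set X, IsOpen U → x ∈ U → ν U ≠ 0}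

/-- Packing number (as an extended nonnegative real): supremum of cardinalities of finite
subsets of `Y` whose elements are pairwise at `dist`-distance at least `ε`. -/
def Npack {X : Type*} (dist : X → X → ℝ) (Y : Set X) (ε : ℝ) : ℝ≥0∞ :=
  ⨆ (S : Finset X) (_ : ↑S ⊆ Y ∧ (S : Set X).Pairwise fun x y => ε ≤ dist x y),
    (S.card : ℝ≥0∞)

end
end Paper

namespace Paper
open ProbabilityTheory

open TopologicalSpace in
lemma msupport_compl_null' {X : Type*} [TopologicalSpace X] [SecondCountableTopology X]
    [MeasurableSpace X] (ν : Measure X) :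
    ν ({x : X | ∀ U : Set X, IsOpen U → x ∈ U → ν U ≠ 0}ᶜ) = 0 := by
  have hb := isBasis_countableBasis X
  have hcover : {x : X | ∀ U : Set X, IsOpen U → x ∈ U → ν U ≠ 0}ᶜ ⊆
      ⋃₀ {U ∈ countableBasis X | ν U = 0} := by
    intro x hx
    simp only [Set.mem_compl_iff, Set.mem_setOf_eq, not_forall] at hx
    obtain ⟨U, hU, hxU, hν⟩ := hx
    rw [not_ne_iff] at hν
    obtain ⟨V, hV, hxV, hVU⟩ := hb.exists_subset_of_mem_open hxU hU
    exact ⟨V, ⟨hV, le_antisymm ((measure_mono hVU).trans_eq hν) zero_le⟩, hxV⟩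
  refine measure_mono_null hcover ?_
  rw [measure_sUnion_null_iff ((countable_countableBasis X).mono (Set.sep_subset _ _))]
  exact fun s hs => hs.2

theorem stmt17 {X : Type*} [MetricSpace X] [TopologicalSpace.SeparableSpace X]
    [MeasurableSpace X] [BorelSpace X]
    (ν : Measure X) [IsProbabilityMeasure ν]
    {ε f : ℝ} (hε : 0 < ε) (hf : 0 ≤ f)
    (hball : ∀ x : X, ν (Metric.closedBall x (2 * ε)) ≤ ENNReal.ofReal f)
    (N : ℕ) (hN : (N : ℝ) * f < 1) :
    ∃ S : Finset X, ↑S ⊆ msupport ν ∧ S.card = N ∧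
      (S : Set X).Pairwise (fun x y => 2 * ε < dist x y) := by
  simp only [msupport]
  have : SecondCountableTopology X := UniformSpace.secondCountable_of_separable X
  classical
  induction N with
  | zero => exact ⟨∅, by simp, rfl, by simp⟩
  | succ n ih =>
    have hn : (n : ℝ) * f < 1 := by
      refine lt_of_le_of_lt ?_ hN
      have : (n : ℝ) ≤ (n + 1 : ℕ) := by exact_mod_cast Nat.le_succ n
      nlinarith
    obtain ⟨S, hSsupp, hScard, hSpair⟩ := ih hn
    -- measure of union of closed balls
    have hunion : ν (⋃ x ∈ S, Metric.closedBall x (2 * ε)) ≤ ENNReal.ofReal ((n : ℝ) * f) := by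
      calc ν (⋃ x ∈ S, Metric.closedBall x (2 * ε))
          ≤ ∑ x ∈ S, ν (Metric.closedBall x (2 * ε)) := measure_biUnion_finset_le S _
        _ ≤ ∑ x ∈ S, (fun _ => ENNReal.ofReal f) x := Finset.sum_le_sum fun x _ => hball x
        _ = (S.card : ℝ≥0∞) * ENNReal.ofReal f := by rw [Finset.sum_const, nsmul_eq_mul]
        _ = ENNReal.ofReal ((n : ℝ) * f) := by
            rw [hScard, ENNReal.ofReal_mul (by positivity), ENNReal.ofReal_natCast]
    have hlt : ν (⋃ x ∈ S, Metric.closedBall x (2 * ε)) < 1 := by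
      refine hunion.trans_lt ?_
      rw [show (1 : ℝ≥0∞) = ENNReal.ofReal 1 by simp]
      exact ENNReal.ofReal_lt_ofReal_iff_of_nonneg (by positivity) |>.2 hn
    -- complement intersected with support has positive measure
    set T := (⋃ x ∈ S, Metric.closedBall x (2 * ε)) ∪
        {x : X | ∀ U : Set X, IsOpen U → x ∈ U → ν U ≠ 0}ᶜ with hT
    have hTlt : ν T < 1 := by
      refine (measure_union_le _ _).trans_lt ?_
      rw [msupport_compl_null' ν, add_zero]; exact hlt
    have hne : Tᶜ.Nonempty := by
      by_contra h
      rw [Set.not_nonempty_iff_eq_empty, Set.compl_empty_iff] at h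
      rw [h, measure_univ] at hTlt
      exact lt_irrefl _ hTlt
    obtain ⟨x, hx⟩ := hne
    rw [hT, Set.compl_union, Set.mem_inter_iff, compl_compl] at hx
    obtain ⟨hx1, hx2⟩ := hx
    have hxfar : ∀ y ∈ S, 2 * ε < dist x y := by
      intro y hy
      by_contra h
      push_neg at h
      exact hx1 (Set.mem_biUnion hy (Metric.mem_closedBall.2 h))
    have hxS : x ∉ S := fun h => by
      have := hxfar x h; simp at this; linarith
    refine ⟨insert x S, ?_, by rw [Finset.card_insert_of_notMem hxS, hScard], ?_⟩
    · intro y hy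
      rcases Finset.mem_insert.1 (by exact_mod_cast hy) with h | h
      · exact h ▸ hx2
      · exact hSsupp h
    · rw [Finset.coe_insert]
      refine Set.Pairwise.insert hSpair fun y hy hne => ?_
      exact ⟨hxfar y hy, by rw [dist_comm]; exact hxfar y hy⟩


end Paper
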